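/- Let ψ(t) ∈ (0, π) satisfy cos ψ(t) = (1-3t²)/(2(t²-1)) for t ∈ (0, √(3/5)). Then ψ/2 varies strictly monotonically in t, lim_{t→√(3/5)} ψ(t)/2 = 0, and lim_{t→0} ψ(t)/2 = π/3. -/

import Mathlib

open Real Filter Set

noncomputable def ψfun (t : ℝ) : ℝ :=
  Real.arccos ((1 - 3 * t ^ 2) / (2 * (t ^ 2 - 1)))

lemma gval (t : ℝ) (h : t ^ 2 < 1) :
    (1 - 3 * t ^ 2) / (2 * (t ^ 2 - 1)) = (3 * t ^ 2 - 1) / (2 * (1 - t ^ 2)) := by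
  have h1 : (2 : ℝ) * (t ^ 2 - 1) ≠ 0 := by nlinarith
  have h2 : (2 : ℝ) * (1 - t ^ 2) ≠ 0 := by nlinarith
  rw [div_eq_div_iff h1 h2]
  ring

lemma sq_lt (t : ℝ) (ht : t ∈ Set.Ioo 0 (Real.sqrt (3 / 5))) : t ^ 2 < 3 / 5 := by
  have := ht.2
  have h0 : (0:ℝ) ≤ 3/5 := by norm_num
  nlinarith [Real.sq_sqrt h0, ht.1, Real.sqrt_nonneg (3/5 : ℝ)]

lemma g_mem (t : ℝ) (ht : t ∈ Set.Ioo 0 (Real.sqrt (3 / 5))) :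
    (1 - 3 * t ^ 2) / (2 * (t ^ 2 - 1)) ∈ Set.Icc (-1 : ℝ) 1 := by
  have h5 := sq_lt t ht
  have h1 : t ^ 2 < 1 := by linarith
  rw [gval t h1]
  have hd : (0:ℝ) < 2 * (1 - t ^ 2) := by nlinarith
  constructor
  · rw [le_div_iff₀ hd]; nlinarith [sq_nonneg t]
  · rw [div_le_one hd]; nlinarith

theorem stmt8 :
    StrictAntiOn (fun t => ψfun t / 2) (Set.Ioo 0 (Real.sqrt (3 / 5))) ∧
    Tendsto (fun t => ψfun t / 2)
      (nhdsWithin (Real.sqrt (3 / 5)) (Set.Iio (Real.sqrt (3 / 5)))) (nhds 0) ∧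
    Tendsto (fun t => ψfun t / 2) (nhdsWithin 0 (Set.Ioi 0)) (nhds (π / 3)) := by
  have h35 : (0:ℝ) ≤ 3/5 := by norm_num
  have hs : (Real.sqrt (3/5)) ^ 2 = 3/5 := Real.sq_sqrt h35
  refine ⟨?_, ?_, ?_⟩
  · intro x hx y hy hxy
    have hx1 : x ^ 2 < 1 := by have := sq_lt x hx; linarith
    have hy1 : y ^ 2 < 1 := by have := sq_lt y hy; linarith
    have hglt : (1 - 3 * x ^ 2) / (2 * (x ^ 2 - 1)) <
        (1 - 3 * y ^ 2) / (2 * (y ^ 2 - 1)) := by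
      rw [gval x hx1, gval y hy1, div_lt_div_iff₀ (by nlinarith) (by nlinarith)]
      nlinarith [hx.1, hy.1]
    have := Real.strictAntiOn_arccos (g_mem x hx) (g_mem y hy) hglt
    simp only [ψfun]
    linarith
  · have hc : ContinuousAt (fun t => ψfun t / 2) (Real.sqrt (3/5)) := by
      apply ContinuousAt.div_const
      apply Real.continuous_arccos.continuousAt.comp
      apply ContinuousAt.div
      · fun_prop
      · fun_prop
      · rw [hs]; norm_num
    have hv : ψfun (Real.sqrt (3/5)) / 2 = 0 := by
      simp only [ψfun, hs]
      norm_num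
    rw [show (0:ℝ) = ψfun (Real.sqrt (3/5)) / 2 from hv.symm]
    exact hc.tendsto.mono_left nhdsWithin_le_nhds
  · have hc : ContinuousAt (fun t => ψfun t / 2) 0 := by
      apply ContinuousAt.div_const
      apply Real.continuous_arccos.continuousAt.comp
      apply ContinuousAt.div
      · fun_prop
      · fun_prop
      · norm_num
    have hv : ψfun 0 / 2 = π / 3 := by
      simp only [ψfun]
      norm_num
      have h1 : (-(1/2) : ℝ) = Real.cos (2*π/3) := by
        rw [show (2*π/3 : ℝ) = π - π/3 by ring, Real.cos_pi_sub, Real.cos_pi_div_three]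
      rw [h1,
        Real.arccos_cos (by positivity) (by nlinarith [Real.pi_pos])]
      ring
    rw [show π/3 = ψfun 0 / 2 from hv.symm]
    exact hc.tendsto.mono_left nhdsWithin_le_nhds
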